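/- For every sequential type τ, the run set ⟦τ⟧ is inhabited: ⊥_τ ∈ ⟦τ⟧. -/

import Mathlib

/-- Terms of the sequential λ-calculus in de Bruijn representation
(so terms are automatically identified up to α-equivalence):
nil `*`, variable prefix `x.M`, push/application `[N].M`,
and pop/abstraction `<x>.M`. -/
inductive STm : Type
  | star : STm
  | var  : Nat → STm → STm
  | push : STm → STm → STm
  | pop  : STm → STm

namespace STm

/-- Lifting of a renaming under a binder. -/
def liftF (f : Nat → Nat) : Nat → Nat
  | 0 => 0
  | n+1 => f n + 1

/-- Renaming of de Bruijn indices. -/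
def rename (f : Nat → Nat) : STm → STm
  | star => star
  | var n M => var (f n) (rename f M)
  | push N M => push (rename f N) (rename f M)
  | pop M => pop (rename (liftF f) M)

/-- Capture-avoiding composition `N ; M`. -/
def comp : STm → STm → STm
  | star, P => P
  | var n N, P => var n (comp N P)
  | push Q N, P => push Q (comp N P)
  | pop N, P => pop (comp N (rename Nat.succ P))

/-- Lifting of a substitution under a binder. -/
def liftS (σ : Nat → STm) : Nat → STm
  | 0 => var 0 star
  | n+1 => rename Nat.succ (σ n)

/-- Capture-avoiding simultaneous substitution; note
`{N/x}(x.M) = N ; {N/x}M`. -/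
def subst (σ : Nat → STm) : STm → STm
  | star => star
  | var n M => comp (σ n) (subst σ M)
  | push N M => push (subst σ N) (subst σ M)
  | pop M => pop (subst (liftS σ) M)

/-- Capture-avoiding substitution `{N/x}M` of `N` for the variable bound
immediately outside `M`. -/
def subst1 (N : STm) : STm → STm :=
  subst (fun n => match n with | 0 => N | n+1 => var n star)

end STm

/-- Machine states: a stack of terms (written bottom-first, so the top
element is the last element of the list) together with a term. -/
abbrev SState := List STm × STm

/-- The transitions of the sequential stack machine:
`(S, [N].M) → (S·N, M)` and `(S·N, <x>.M) → (S, {N/x}M)`. -/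
inductive SMStep : SState → SState → Prop
  | push (S : List STm) (N M : STm) : SMStep (S, .push N M) (S ++ [N], M)
  | pop (S : List STm) (N M : STm) : SMStep (S ++ [N], .pop M) (S, STm.subst1 N M)

/-- A run of the sequential machine: a finite sequence of transitions. -/
def SRun : SState → SState → Prop := Relation.ReflTransGen SMStep

/-- Sequential types `ρ_n…ρ_1 ⟹ τ_1…τ_m`: an implication between two
finite vectors of sequential types. The first list is the input vector
as written (i.e. `arr (rev ρ⃗) τ⃗` represents `rev(ρ⃗) ⟹ τ⃗`). -/
inductive STy : Type
  | arr : List STy → List STy → STy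

mutual
/-- The run set `⟦τ⟧` of a sequential type `τ = rev(σ⃗) ⟹ τ⃗`: the terms `M`
such that for every stack `S ∈ ⟦σ⃗⟧` there are a stack `T ∈ ⟦τ⃗⟧` and a
machine run `(S,M) ⇓ (T,*)`. -/
def RunSet : STy → STm → Prop
  | .arr ins outs => fun M =>
      ∀ S : List STm, StackSet ins S.reverse →
        ∃ T : List STm, StackSet outs T ∧ SRun (S, M) (T, .star)
/-- The set `⟦τ_1…τ_n⟧` of stacks `ε·N_1·…·N_n` with each `N_i ∈ ⟦τ_i⟧`
(the type vector and the stack both listed bottom-first). -/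
def StackSet : List STy → List STm → Prop
  | [], S => S = []
  | _ :: _, [] => False
  | τ :: τs, N :: S => RunSet τ N ∧ StackSet τs S
end

/-- Iterated abstraction `<x_n>.….<x_1>.M`. -/
def popsN : Nat → STm → STm
  | 0, M => M
  | k+1, M => .pop (popsN k M)

mutual
/-- The canonical inhabitant `⊥_τ` of a sequential type:
for `τ = σ_n…σ_1 ⟹ τ_1…τ_m`,
`⊥_τ = <x_n>.….<x_1>.[⊥_{τ_1}].….[⊥_{τ_m}].*`. -/
def botTm : STy → STm
  | .arr ins outs => popsN ins.length (botList outs)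
/-- The sequence of pushes `[⊥_{τ_1}].….[⊥_{τ_m}].*`. -/
def botList : List STy → STm
  | [] => .star
  | τ :: τs => .push (botTm τ) (botList τs)
end


section Aux

theorem subst_popsN (B : STm) (hB : ∀ σ, STm.subst σ B = B) :
    ∀ k σ, STm.subst σ (popsN k B) = popsN k B := by
  intro k
  induction k with
  | zero => intro σ; simpa [popsN] using hB σ
  | succ k ih => intro σ; simp [popsN, STm.subst, ih]

mutual
theorem botTm_closed : ∀ (τ : STy) (σ : Nat → STm), STm.subst σ (botTm τ) = botTm τ
  | .arr ins outs => by
    intro σ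
    show STm.subst σ (botTm (.arr ins outs)) = botTm (.arr ins outs)
    simp only [botTm]
    exact subst_popsN _ (botList_closed outs) _ σ
theorem botList_closed : ∀ (τs : List STy) (σ : Nat → STm),
    STm.subst σ (botList τs) = botList τs
  | [] => by intro σ; simp [botList, STm.subst]
  | τ :: τs => by
    intro σ
    show STm.subst σ (botList (τ :: τs)) = botList (τ :: τs)
    simp [botList, STm.subst, botTm_closed τ, botList_closed τs]
end

theorem stackset_length : ∀ (τs : List STy) (L : List STm), StackSet τs L → L.length = τs.length := by
  intro τs
  induction τs with
  | nil => intro L h; simp [StackSet] at h; simp [h]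
  | cons τ τs ih =>
    intro L h
    cases L with
    | nil => simp [StackSet] at h
    | cons N S =>
      simp [StackSet] at h
      simp [ih S h.2]

theorem run_pops (B : STm) (hB : ∀ σ, STm.subst σ B = B) :
    ∀ k (S : List STm), S.length = k → SRun (S, popsN k B) ([], B) := by
  intro k
  induction k with
  | zero =>
    intro S hS
    have : S = [] := List.length_eq_zero_iff.mp hS
    subst this
    simp only [popsN]
    exact Relation.ReflTransGen.refl
  | succ k ih =>
    intro S hS
    have hne : S ≠ [] := by intro h; subst h; simp at hS
    have hS' : S = S.dropLast ++ [S.getLast hne] := (List.dropLast_append_getLast hne).symm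
    have hlen : S.dropLast.length = k := by
      have : S.dropLast.length = S.length - 1 := List.length_dropLast
      omega
    have step : SMStep (S, popsN (k+1) B) (S.dropLast, popsN k B) := by
      have := SMStep.pop S.dropLast (S.getLast hne) (popsN k B)
      rw [← hS'] at this
      have heq : STm.subst1 (S.getLast hne) (popsN k B) = popsN k B :=
        subst_popsN B hB k _
      rw [heq] at this
      simpa [popsN] using this
    exact Relation.ReflTransGen.head step (ih S.dropLast hlen)

theorem run_pushes : ∀ (outs : List STy) (S : List STm),
    SRun (S, botList outs) (S ++ outs.map botTm, STm.star) := by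
  intro outs
  induction outs with
  | nil =>
    intro S
    simp only [botList, List.map_nil, List.append_nil]
    exact Relation.ReflTransGen.refl
  | cons τ τs ih =>
    intro S
    have step : SMStep (S, botList (τ :: τs)) (S ++ [botTm τ], botList τs) := by
      simpa [botList] using SMStep.push S (botTm τ) (botList τs)
    have := ih (S ++ [botTm τ])
    simp only [List.append_assoc, List.singleton_append] at this
    exact Relation.ReflTransGen.head step (by simpa [SRun] using this)

mutual
theorem botTm_mem : ∀ τ, RunSet τ (botTm τ)
  | .arr ins outs => by
    show RunSet (.arr ins outs) (botTm (.arr ins outs))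
    simp only [RunSet]
    intro S hS
    refine ⟨outs.map botTm, botList_mem outs, ?_⟩
    have hlen : S.length = ins.length := by
      have := stackset_length ins S.reverse hS
      simpa using this
    have h1 : SRun (S, botTm (.arr ins outs)) ([], botList outs) := by
      have := run_pops (botList outs) (botList_closed outs) ins.length S hlen
      simpa [botTm] using this
    have h2 := run_pushes outs []
    simp only [List.nil_append] at h2
    exact Relation.ReflTransGen.trans h1 h2
theorem botList_mem : ∀ τs, StackSet τs (τs.map botTm)
  | [] => by simp [StackSet]
  | τ :: τs => by
    show StackSet (τ :: τs) (botTm τ :: τs.map botTm)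
    exact ⟨botTm_mem τ, botList_mem τs⟩
end

end Aux

/-- Every run set is inhabited: `⊥_τ ∈ ⟦τ⟧`. -/
theorem seq_runset_inhabited (τ : STy) : RunSet τ (botTm τ) := botTm_mem τ
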